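/- arXiv:2405.00154 — 2 statements merged into one kernel-verified Lean document; each statement's English description precedes it below -/
import Mathlib

section
/- Consider the exponential-weights (online mirror descent) prediction-with-expert-advice algorithm with n experts over a time horizon T: the weights are initialized as w_i^1 = 1 for all i, and updated multiplicatively as w_i^{t+1} = w_i^t · exp(−μ · g_{t,i}), where g_t ∈ ℝ^n is the vector of expert losses at round t, and the algorithm plays the probability vector x_t ∈ ℝ^n with [x_t]_i = w_i^t / (∑_{j=1}^n w_j^t). If n ≥ 2, T ≥ 1, all losses satisfy 0 ≤ g_{t,i} ≤ 1, and the learning rate is μ = √(8·log(n)/T), then the regret satisfies ∑_{t=1}^T ⟨x_t, g_t⟩ − min_{1≤i≤n} ∑_{t=1}^T g_{t,i} ≤ 2·√(2·T·log n). -/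
lemma exp_neg_le_aux (a : ℝ) (ha : 0 ≤ a) : Real.exp (-a) ≤ 1 - a + 3/4 * a^2 := by
  have h3 : Real.exp (-a) * Real.exp a = 1 := by
    rw [← Real.exp_add]; simp
  have hpos : 0 < Real.exp a := Real.exp_pos _
  have key : 1 ≤ (1 - a + 3/4 * a^2) * Real.exp a := by
    have h1 : a/2 + 1 ≤ Real.exp (a/2) := Real.add_one_le_exp _
    have h2 : (1 + a/2)^2 ≤ Real.exp a := by
      rw [show a = a/2 + a/2 by ring, Real.exp_add]
      nlinarith [Real.exp_pos (a/2)]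
    nlinarith [sq_nonneg a, sq_nonneg (a*a)]
  nlinarith [key, hpos]

/-- Regret bound for the exponential-weights (online mirror descent) algorithm
with `n` experts over horizon `T`, losses in `[0,1]`, and learning rate
`μ = √(8 log n / T)`: the regret is at most `2 √(2 T log n)`. -/
theorem exp_weights_regret
    (n T : ℕ) (hn : 2 ≤ n) (hT : 1 ≤ T)
    (g : ℕ → Fin n → ℝ)
    (hg : ∀ t i, 0 ≤ g t i ∧ g t i ≤ 1)
    (μ : ℝ) (hμ : μ = Real.sqrt (8 * Real.log n / T))
    (w : ℕ → Fin n → ℝ)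
    (hw1 : ∀ i, w 1 i = 1)
    (hwrec : ∀ t, 1 ≤ t → ∀ i, w (t + 1) i = w t i * Real.exp (-μ * g t i))
    (x : ℕ → Fin n → ℝ)
    (hx : ∀ t i, x t i = w t i / ∑ j, w t j) :
    (∑ t ∈ Finset.Icc 1 T, ∑ i, x t i * g t i) -
      Finset.univ.inf' ⟨(⟨0, by omega⟩ : Fin n), Finset.mem_univ _⟩
        (fun i => ∑ t ∈ Finset.Icc 1 T, g t i)
      ≤ 2 * Real.sqrt (2 * T * Real.log n) := by
  have hn1 : (1:ℝ) < n := by exact_mod_cast (by omega : 1 < n)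
  have hL : 0 < Real.log n := Real.log_pos hn1
  have hT0 : (0:ℝ) < T := by exact_mod_cast hT
  set L : ℝ := Real.log n with hLdef
  have hμpos : 0 < μ := by
    rw [hμ]; exact Real.sqrt_pos.mpr (by positivity)
  have hμsq : μ ^ 2 = 8 * L / T := by
    rw [hμ, Real.sq_sqrt (by positivity : (0:ℝ) ≤ 8 * L / T)]
  -- positivity of weights
  have wpos : ∀ t, 1 ≤ t → ∀ i, 0 < w t i := by
    intro t ht
    induction t, ht using Nat.le_induction with
    | base => intro i; rw [hw1]; norm_num
    | succ t ht ih => intro i; rw [hwrec t ht]; exact mul_pos (ih i) (Real.exp_pos _)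
  have Wpos : ∀ t, 1 ≤ t → 0 < ∑ j, w t j := by
    intro t ht
    exact Finset.sum_pos (fun j _ => wpos t ht j) ⟨⟨0, by omega⟩, Finset.mem_univ _⟩
  have xnn : ∀ t, 1 ≤ t → ∀ i, 0 ≤ x t i := fun t ht i => by
    rw [hx]; exact div_nonneg (wpos t ht i).le (Wpos t ht).le
  have xsum : ∀ t, 1 ≤ t → ∑ i, x t i = 1 := by
    intro t ht
    simp only [hx, ← Finset.sum_div]
    exact div_self (Wpos t ht).ne'
  -- one-step inequality
  have step : ∀ t, 1 ≤ t →
      ∑ j, w (t+1) j ≤ (∑ j, w t j) *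
        Real.exp (-μ * (∑ i, x t i * g t i) + 3/4 * μ^2) := by
    intro t ht
    have hrw : ∑ j, w (t+1) j = (∑ k, w t k) * ∑ j, x t j * Real.exp (-μ * g t j) := by
      rw [Finset.mul_sum]
      refine Finset.sum_congr rfl fun j _ => ?_
      rw [hwrec t ht, hx]
      field_simp [(Wpos t ht).ne']
    rw [hrw]
    have hbd : ∑ j, x t j * Real.exp (-μ * g t j) ≤
        Real.exp (-μ * (∑ i, x t i * g t i) + 3/4 * μ^2) := by
      have h1 : ∑ j, x t j * Real.exp (-μ * g t j) ≤
          ∑ j, x t j * (1 - μ * g t j + 3/4 * μ^2) := by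
        refine Finset.sum_le_sum fun j _ => ?_
        refine mul_le_mul_of_nonneg_left ?_ (xnn t ht j)
        have hg0 := (hg t j).1
        have hg1 := (hg t j).2
        have ha : 0 ≤ μ * g t j := mul_nonneg hμpos.le hg0
        have h := exp_neg_le_aux (μ * g t j) ha
        have hsq : (μ * g t j)^2 ≤ μ^2 := by
          have hgg : g t j ^ 2 ≤ 1 := by nlinarith
          calc (μ * g t j)^2 = μ^2 * g t j ^ 2 := by ring
            _ ≤ μ^2 * 1 := mul_le_mul_of_nonneg_left hgg (sq_nonneg μ)
            _ = μ^2 := by ring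
        calc Real.exp (-μ * g t j) = Real.exp (-(μ * g t j)) := by ring_nf
          _ ≤ 1 - μ * g t j + 3/4 * (μ * g t j)^2 := h
          _ ≤ 1 - μ * g t j + 3/4 * μ^2 := by linarith
      have h2 : ∑ j, x t j * (1 - μ * g t j + 3/4 * μ^2)
          = (1 + 3/4 * μ^2) * (∑ j, x t j) - μ * (∑ j, x t j * g t j) := by
        rw [Finset.mul_sum, Finset.mul_sum, ← Finset.sum_sub_distrib]
        exact Finset.sum_congr rfl fun j _ => by ring
      have h3 : 1 + (-μ * (∑ i, x t i * g t i) + 3/4 * μ^2) ≤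
          Real.exp (-μ * (∑ i, x t i * g t i) + 3/4 * μ^2) := by
        have := Real.add_one_le_exp (-μ * (∑ i, x t i * g t i) + 3/4 * μ^2)
        linarith
      have h2' : ∑ j, x t j * (1 - μ * g t j + 3/4 * μ^2)
          = (1 + 3/4 * μ^2) - μ * (∑ j, x t j * g t j) := by
        rw [h2, xsum t ht]; ring
      linarith [h1, h3]
    exact mul_le_mul_of_nonneg_left hbd (Wpos t ht).le
  -- upper bound on total weight by induction
  have main : ∀ t : ℕ, ∑ j, w (t+1) j ≤
      (n : ℝ) * Real.exp (-μ * (∑ s ∈ Finset.Icc 1 t, ∑ i, x s i * g s i)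
        + t * (3/4 * μ^2)) := by
    intro t
    induction t with
    | zero =>
        simp [hw1, Finset.sum_const, Finset.card_univ]
    | succ t ih =>
        calc ∑ j, w (t+1+1) j
            ≤ (∑ j, w (t+1) j) *
              Real.exp (-μ * (∑ i, x (t+1) i * g (t+1) i) + 3/4 * μ^2) :=
              step (t+1) (by omega)
          _ ≤ ((n:ℝ) * Real.exp (-μ * (∑ s ∈ Finset.Icc 1 t, ∑ i, x s i * g s i)
                + t * (3/4 * μ^2))) *
              Real.exp (-μ * (∑ i, x (t+1) i * g (t+1) i) + 3/4 * μ^2) :=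
              mul_le_mul_of_nonneg_right ih (Real.exp_pos _).le
          _ = (n:ℝ) * Real.exp (-μ * (∑ s ∈ Finset.Icc 1 (t+1), ∑ i, x s i * g s i)
                + (t+1 : ℕ) * (3/4 * μ^2)) := by
              rw [mul_assoc, ← Real.exp_add, Finset.sum_Icc_succ_top (by omega : 1 ≤ t+1)]
              push_cast
              ring_nf
  -- closed form of weights
  have wform : ∀ (t : ℕ) (i : Fin n),
      w (t+1) i = Real.exp (-μ * ∑ s ∈ Finset.Icc 1 t, g s i) := by
    intro t i
    induction t with
    | zero => simp [hw1]
    | succ t ih =>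
        rw [hwrec (t+1) (by omega), ih, ← Real.exp_add,
          Finset.sum_Icc_succ_top (by omega : 1 ≤ t+1)]
        ring_nf
  -- pick the best expert
  obtain ⟨i0, -, hi0⟩ := Finset.exists_mem_eq_inf' (α := ℝ)
    (⟨(⟨0, by omega⟩ : Fin n), Finset.mem_univ _⟩)
    (fun i => ∑ t ∈ Finset.Icc 1 T, g t i)
  rw [hi0]
  set G : ℝ := ∑ t ∈ Finset.Icc 1 T, g t i0 with hG
  set S : ℝ := ∑ t ∈ Finset.Icc 1 T, ∑ i, x t i * g t i with hS
  -- combine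
  have hlow : Real.exp (-μ * G) ≤ (n:ℝ) * Real.exp (-μ * S + T * (3/4 * μ^2)) := by
    calc Real.exp (-μ * G) = w (T+1) i0 := (wform T i0).symm
      _ ≤ ∑ j, w (T+1) j :=
          Finset.single_le_sum (fun j _ => (wpos (T+1) (by omega) j).le) (Finset.mem_univ i0)
      _ ≤ _ := main T
  have hlog : -μ * G ≤ L + (-μ * S + T * (3/4 * μ^2)) := by
    have hn0 : (0:ℝ) < n := by positivity
    have hrw : (n:ℝ) * Real.exp (-μ * S + T * (3/4 * μ^2))
        = Real.exp (L + (-μ * S + T * (3/4 * μ^2))) := by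
      rw [Real.exp_add L, hLdef, Real.exp_log hn0]
    rw [hrw] at hlow
    exact Real.exp_le_exp.mp hlow
  -- final arithmetic
  have hLeq : L = μ^2 * T / 8 := by
    field_simp at hμsq ⊢
    linarith
  have hreg : S - G ≤ 7/8 * (T * μ) := by
    have h1 : μ * (S - G) ≤ L + T * (3/4 * μ^2) := by linarith
    rw [hLeq] at h1
    have h2 : μ * (S - G) ≤ μ * (7/8 * (T * μ)) := by nlinarith
    exact le_of_mul_le_mul_left h2 hμpos
  have hfin : 2 * Real.sqrt (2 * T * L) = T * μ := by
    have : 2 * (T:ℝ) * L = (T * μ / 2)^2 := by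
      rw [hLeq]; ring
    rw [this, Real.sqrt_sq (by positivity)]
    ring
  rw [hfin]
  nlinarith [hreg, mul_pos hT0 hμpos]
end

section
/- Let (Ω, 𝓕, ℙ) be a probability space, let the set of pages be a finite type I with |I| = P, and let q_1, q_2, … be an i.i.d. sequence of I-valued random variables with ℙ(q_1 = e) = p_e, where e ↦ p_e is injective and p_e > 0 for all e. Fix a linear order on I to break ties, let c > 0, let w_e(t) = c·|{s : 1 ≤ s ≤ t, q_s = e}|, fix a buffer size k with 2 ≤ k < P, and define the EEvA-T buffer process by: 𝓑_1 is an arbitrary fixed subset of I of size k, and for t ≥ 1, 𝓑_{t+1} = 𝓑_t if q_t ∈ 𝓑_t, and otherwise 𝓑_{t+1} = (𝓑_t \ {e_t}) ∪ {q_t} where e_t is the (tie-break-minimal) page of 𝓑_t minimizing w_·(t). Define the residual buffer 𝓑_t^{−1} = 𝓑_t \ {e_t} (the buffer minus its minimal-weight page), and let 𝓑_opt^{−1} be the set of the k−1 pages with the largest query probabilities. Then almost surely there exists T such that 𝓑_t^{−1} = 𝓑_opt^{−1} for all t ≥ T, i.e. lim_{t→∞} 𝓑_t^{−1} = 𝓑_opt^{−1}.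 (This is the paper's Theorem 2.) -/
open MeasureTheory ProbabilityTheory Filter Classical Topology

lemma eevaT_count_sum {I : Type*} [DecidableEq I] (g : ℕ → I) (e : I) (n : ℕ) :
    ((((Finset.Icc 1 n).filter (fun s => g s = e)).card : ℝ)) =
      ∑ i ∈ Finset.range n, (if g (i + 1) = e then (1 : ℝ) else 0) := by
  classical
  induction n with
  | zero => simp
  | succ n ih =>
    have hIcc : Finset.Icc 1 (n + 1) = insert (n + 1) (Finset.Icc 1 n) := by
      ext s; simp [Finset.mem_Icc, Finset.mem_insert]; omega
    rw [Finset.sum_range_succ, ← ih, hIcc, Finset.filter_insert]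
    by_cases h : g (n + 1) = e
    · rw [if_pos h, if_pos h, Finset.card_insert_of_notMem (by simp)]
      push_cast; ring
    · rw [if_neg h, if_neg h]; simp

lemma eevaT_slln {Ω : Type*} [MeasureSpace Ω] [IsProbabilityMeasure (ℙ : Measure Ω)]
    {I : Type*} [DecidableEq I] [MeasurableSpace I] [MeasurableSingletonClass I]
    (q : ℕ → Ω → I) (hmeas : ∀ n, Measurable (q n))
    (hindep : iIndepFun q ℙ)
    (hident : ∀ n, IdentDistrib (q n) (q 1) ℙ ℙ) (e : I) :
    ∀ᵐ ω ∂(ℙ : Measure Ω), Tendsto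
      (fun n : ℕ => ((((Finset.Icc 1 n).filter (fun s => q s ω = e)).card : ℝ)) / n)
      atTop (𝓝 ((ℙ (q 1 ⁻¹' {e})).toReal)) := by
  classical
  set φ : I → ℝ := fun x => if x = e then 1 else 0 with hφ
  have hφm : Measurable φ := by
    have : φ = Set.indicator ({e} : Set I) (fun _ => (1 : ℝ)) := by
      funext x; by_cases h : x = e <;> simp [hφ, h, Set.indicator_apply]
    rw [this]
    exact measurable_const.indicator (measurableSet_singleton e)
  set X : ℕ → Ω → ℝ := fun i ω => φ (q (i + 1) ω) with hX
  have hXeq : X 0 = (q 1 ⁻¹' {e}).indicator (fun _ => (1 : ℝ)) := by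
    funext ω; by_cases h : q 1 ω = e <;> simp [hX, hφ, h, Set.indicator_apply]
  have hms : MeasurableSet (q 1 ⁻¹' {e}) := (hmeas 1) (measurableSet_singleton e)
  have hint : Integrable (X 0) ℙ := by
    rw [hXeq]; exact (integrable_const (1 : ℝ)).indicator hms
  have hindX : Pairwise (Function.onFun (IndepFun · · (ℙ : Measure Ω)) X) := by
    intro i j hij
    exact (hindep.indepFun (show i + 1 ≠ j + 1 by omega)).comp hφm hφm
  have hidX : ∀ i, IdentDistrib (X i) (X 0) ℙ ℙ := fun i =>
    (hident (i + 1)).comp hφm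
  have hEX : (ℙ : Measure Ω)[X 0] = (ℙ (q 1 ⁻¹' {e})).toReal := by
    rw [hXeq, integral_indicator_const (1 : ℝ) hms, smul_eq_mul, mul_one, measureReal_def]
  have h := strong_law_ae_real X hint hindX hidX
  rw [hEX] at h
  filter_upwards [h] with ω hω
  convert hω using 2 with n
  rw [eevaT_count_sum (fun s => q s ω) e n]

/-- Deterministic core of the convergence argument, for a fixed sample path. -/
lemma eevaT_det {I : Type*} [Fintype I] [LinearOrder I]
    (p : I → ℝ) (hinj : Function.Injective p)
    (k : ℕ) (hk1 : 2 ≤ k)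
    (cnt : I → ℕ → ℕ) (qq : ℕ → I)
    (B : ℕ → Finset I) (v : ℕ → I)
    (hcard1 : (B 1).card = k)
    (hv_mem : ∀ t, 1 ≤ t → v t ∈ B t)
    (hv_min : ∀ t, 1 ≤ t → ∀ e ∈ B t, cnt (v t) t ≤ cnt e t)
    (hBrec : ∀ t, 1 ≤ t →
      B (t + 1) = if qq t ∈ B t then B t else insert (qq t) ((B t).erase (v t)))
    (Bopt : Finset I) (hBoptCard : Bopt.card = k - 1)
    (hBopt : ∀ e ∈ Bopt, ∀ e' ∉ Bopt, p e' < p e)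
    (T0 : ℕ) (hT0 : 1 ≤ T0)
    (H1 : ∀ t ≥ T0, ∀ e e', p e' < p e → cnt e' t < cnt e t)
    (H2 : ∀ e ∈ Bopt, ∀ N, ∃ s ≥ N, qq s = e) :
    ∃ T : ℕ, ∀ t ≥ T, (B t).erase (v t) = Bopt := by
  -- cardinality invariant
  have hcard : ∀ t, 1 ≤ t → (B t).card = k := by
    intro t ht
    induction t, ht using Nat.le_induction with
    | base => exact hcard1
    | succ t ht ih =>
      rw [hBrec t ht]
      by_cases h : qq t ∈ B t
      · simp [h, ih]
      · rw [if_neg h, Finset.card_insert_of_notMem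
          (fun hm => h (Finset.mem_of_mem_erase hm)),
          Finset.card_erase_of_mem (hv_mem t ht)]
        omega
  -- after T0 the victim has minimal probability in the buffer
  have step2 : ∀ t ≥ T0, ∀ e ∈ B t, e ≠ v t → p (v t) < p e := by
    intro t ht e he hne
    have h1 : cnt (v t) t ≤ cnt e t := hv_min t (le_trans hT0 ht) e he
    rcases lt_trichotomy (p (v t)) (p e) with h | h | h
    · exact h
    · exact absurd (hinj h.symm) hne
    · exact absurd (H1 t ht _ _ h) (by omega)
  -- after T0 the victim is never in Bopt
  have step3 : ∀ t ≥ T0, v t ∉ Bopt := by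
    intro t ht hvB
    have hsub : (B t).erase (v t) ⊆ Bopt.erase (v t) := by
      intro e' he'
      have hne : e' ≠ v t := Finset.ne_of_mem_erase he'
      have heB : e' ∈ B t := Finset.mem_of_mem_erase he'
      have hlt : p (v t) < p e' := step2 t ht e' heB hne
      by_cases h : e' ∈ Bopt
      · exact Finset.mem_erase.2 ⟨hne, h⟩
      · exact absurd (hBopt _ hvB _ h) (by linarith)
    have h1 : ((B t).erase (v t)).card = k - 1 := by
      rw [Finset.card_erase_of_mem (hv_mem t (le_trans hT0 ht)),
        hcard t (le_trans hT0 ht)]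
    have h2 : (Bopt.erase (v t)).card = k - 1 - 1 := by
      rw [Finset.card_erase_of_mem hvB, hBoptCard]
    have := Finset.card_le_card hsub
    omega
  -- retention of Bopt pages after T0
  have step4 : ∀ t ≥ T0, ∀ e ∈ Bopt, e ∈ B t → e ∈ B (t + 1) := by
    intro t ht e heO heB
    rw [hBrec t (le_trans hT0 ht)]
    by_cases h : qq t ∈ B t
    · simpa [h]
    · rw [if_neg h]
      exact Finset.mem_insert_of_mem
        (Finset.mem_erase.2 ⟨fun hEq => step3 t ht (hEq ▸ heO), heB⟩)
  -- each Bopt page is eventually permanently in the buffer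
  have step5 : ∀ e ∈ Bopt, ∃ Te ≥ T0, ∀ t ≥ Te, e ∈ B t := by
    intro e heO
    obtain ⟨s, hs, hqs⟩ := H2 e heO T0
    refine ⟨s + 1, by omega, ?_⟩
    intro t ht
    induction t, ht using Nat.le_induction with
    | base =>
      rw [hBrec s (le_trans hT0 hs)]
      by_cases h : qq s ∈ B s
      · rw [if_pos h]; exact hqs ▸ h
      · rw [if_neg h]; exact hqs ▸ Finset.mem_insert_self _ _
    | succ t ht ih => exact step4 t (by omega) e heO ih
  choose f hf1 hf2 using step5
  classical
  refine ⟨max T0 (Bopt.sup fun e => if h : e ∈ Bopt then f e h else 0), ?_⟩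
  intro t ht
  have htT0 : T0 ≤ t := le_trans (le_max_left _ _) ht
  have hOsub : Bopt ⊆ B t := by
    intro e heO
    apply hf2 e heO
    refine le_trans (le_trans ?_ (le_max_right T0 _)) ht
    have : (if h : e ∈ Bopt then f e h else 0) ≤ Bopt.sup
        (fun e => if h : e ∈ Bopt then f e h else 0) := Finset.le_sup (f := fun e => if h : e ∈ Bopt then f e h else 0) heO
    simpa [heO] using this
  have hsub : Bopt ⊆ (B t).erase (v t) := by
    intro e heO
    exact Finset.mem_erase.2 ⟨fun hEq => step3 t htT0 (hEq ▸ heO), hOsub heO⟩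
  refine (Finset.eq_of_subset_of_card_le hsub ?_).symm
  rw [Finset.card_erase_of_mem (hv_mem t (le_trans hT0 htT0)),
    hcard t (le_trans hT0 htT0), hBoptCard]

/-- The paper's Theorem 2: for the EEvA-T buffer process driven by i.i.d. page
requests with injective positive query probabilities, the residual buffer
`𝓑_t^{-1} = 𝓑_t \ {argmin-weight page}` almost surely converges (is eventually
equal) to the optimal residual buffer `𝓑_opt^{-1}`, the set of the `k - 1`
pages with the largest query probabilities. -/
theorem eevaT_residual_buffer_converges_to_optimal
    {Ω : Type*} [MeasureSpace Ω] [IsProbabilityMeasure (ℙ : Measure Ω)]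
    {I : Type*} [Fintype I] [LinearOrder I]
    [MeasurableSpace I] [MeasurableSingletonClass I]
    (P : ℕ) (hP : Fintype.card I = P)
    (q : ℕ → Ω → I)
    (hmeas : ∀ n, Measurable (q n))
    (hindep : iIndepFun q ℙ)
    (hident : ∀ n, IdentDistrib (q n) (q 1) ℙ ℙ)
    (p : I → ℝ)
    (hp : ∀ e, (ℙ (q 1 ⁻¹' {e})).toReal = p e)
    (hinj : Function.Injective p)
    (hpos : ∀ e, 0 < p e)
    (c : ℝ) (hc : 0 < c)
    (w : I → ℕ → Ω → ℝ)
    (hw : ∀ e t ω,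
      w e t ω = c * ((Finset.Icc 1 t).filter (fun s => q s ω = e)).card)
    (k : ℕ) (hk1 : 2 ≤ k) (hkP : k < P)
    (B0 : Finset I) (hB0 : B0.card = k)
    (B : ℕ → Ω → Finset I) (v : ℕ → Ω → I)
    (hB1 : ∀ ω, B 1 ω = B0)
    -- the victim `v t ω` is the tie-break-minimal page of `B t ω` minimizing `w · t ω`
    (hv_mem : ∀ t ω, 1 ≤ t → v t ω ∈ B t ω)
    (hv_min : ∀ t ω, 1 ≤ t → ∀ e ∈ B t ω, w (v t ω) t ω ≤ w e t ω)
    (hv_tie : ∀ t ω, 1 ≤ t → ∀ e ∈ B t ω, w e t ω = w (v t ω) t ω → v t ω ≤ e)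
    -- buffer recursion: keep the buffer on a hit, otherwise evict the victim
    (hBrec : ∀ t ω, 1 ≤ t →
      B (t + 1) ω =
        if q t ω ∈ B t ω then B t ω
        else insert (q t ω) ((B t ω).erase (v t ω)))
    -- the optimal residual buffer: the `k - 1` pages of largest probability
    (Bopt : Finset I) (hBoptCard : Bopt.card = k - 1)
    (hBopt : ∀ e ∈ Bopt, ∀ e' ∉ Bopt, p e' < p e) :
    ∀ᵐ ω ∂ℙ, ∃ T : ℕ, ∀ t ≥ T, (B t ω).erase (v t ω) = Bopt := by
  classical
  have hae : ∀ᵐ ω ∂(ℙ : Measure Ω), ∀ e : I, Tendsto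
      (fun n : ℕ => ((((Finset.Icc 1 n).filter (fun s => q s ω = e)).card : ℝ)) / n)
      atTop (nhds (p e)) := by
    rw [MeasureTheory.ae_all_iff]
    intro e
    have h := eevaT_slln q hmeas hindep hident e
    rw [hp e] at h
    exact h
  filter_upwards [hae] with ω hω
  set cnt : I → ℕ → ℕ :=
    fun e t => ((Finset.Icc 1 t).filter (fun s => q s ω = e)).card with hcntdef
  -- eventual strict ordering of counts according to probabilities
  have hpair : ∀ e e' : I, ∀ᶠ t in atTop, p e' < p e → cnt e' t < cnt e t := by
    intro e e'
    by_cases h : p e' < p e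
    · have hd : Tendsto (fun n : ℕ => ((cnt e n : ℝ)) / n - ((cnt e' n : ℝ)) / n)
          atTop (nhds (p e - p e')) := (hω e).sub (hω e')
      have hpos := hd.eventually (eventually_gt_nhds (show (0:ℝ) < p e - p e' by linarith))
      filter_upwards [hpos, eventually_ge_atTop 1] with n hn hn1 _
      have hn0 : (0:ℝ) < n := by exact_mod_cast hn1
      have hlt : ((cnt e' n : ℝ)) / n < ((cnt e n : ℝ)) / n := by linarith
      have h2 : ((cnt e' n : ℝ)) < ((cnt e n : ℝ)) := by
        have := mul_lt_mul_of_pos_right hlt hn0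
        rwa [div_mul_cancel₀ _ (ne_of_gt hn0), div_mul_cancel₀ _ (ne_of_gt hn0)] at this
      exact_mod_cast h2
    · filter_upwards with n hc
      exact absurd hc h
  have hev : ∀ᶠ t in atTop, ∀ e e' : I, p e' < p e → cnt e' t < cnt e t :=
    eventually_all.2 fun e => eventually_all.2 fun e' => hpair e e'
  obtain ⟨T0', hT0'⟩ := eventually_atTop.1 hev
  -- every page is requested at arbitrarily large times
  have H2 : ∀ e : I, ∀ N : ℕ, ∃ s ≥ N, q s ω = e := by
    intro e N
    by_contra hcon
    push_neg at hcon
    have hbd : ∀ n, cnt e n ≤ N := by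
      intro n
      have hsub : (Finset.Icc 1 n).filter (fun s => q s ω = e) ⊆ Finset.Icc 1 N := by
        intro s hs
        rw [Finset.mem_filter, Finset.mem_Icc] at hs
        rw [Finset.mem_Icc]
        refine ⟨hs.1.1, ?_⟩
        by_contra hsN
        exact hcon s (by omega) hs.2
      calc cnt e n ≤ (Finset.Icc 1 N).card := Finset.card_le_card hsub
        _ = N := by rw [Nat.card_Icc]; omega
    have hhalf : ∀ᶠ n in atTop, p e / 2 < ((cnt e n : ℝ)) / n :=
      (hω e).eventually (eventually_gt_nhds (half_lt_self (hpos e)))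
    have hbig : Tendsto (fun n : ℕ => (n : ℝ) * (p e / 2)) atTop atTop :=
      (tendsto_natCast_atTop_atTop).atTop_mul_const (half_pos (hpos e))
    obtain ⟨n, hn1, hn2, hn3⟩ :=
      (hhalf.and ((hbig.eventually_gt_atTop (N : ℝ)).and (eventually_ge_atTop 1))).exists
    have hn0 : (0:ℝ) < n := by exact_mod_cast hn3
    have h4 : (n : ℝ) * (p e / 2) < (cnt e n : ℝ) := by
      have := mul_lt_mul_of_pos_right hn1 hn0
      rwa [div_mul_cancel₀ _ (ne_of_gt hn0), mul_comm] at this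
    have h5 : (cnt e n : ℝ) ≤ (N : ℝ) := by exact_mod_cast hbd n
    linarith
  -- translate the minimality of the victim's weight into counts
  have hvmin' : ∀ t, 1 ≤ t → ∀ e ∈ B t ω, cnt (v t ω) t ≤ cnt e t := by
    intro t ht e he
    have h := hv_min t ω ht e he
    rw [hw, hw] at h
    have h2 := le_of_mul_le_mul_left h hc
    exact_mod_cast h2
  exact eevaT_det p hinj k hk1 cnt (fun s => q s ω) (fun t => B t ω) (fun t => v t ω)
    (by show (B 1 ω).card = k; rw [hB1 ω]; exact hB0)
    (fun t ht => hv_mem t ω ht) hvmin'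
    (fun t ht => hBrec t ω ht) Bopt hBoptCard hBopt
    (max T0' 1) (le_max_right _ _)
    (fun t ht e e' h => hT0' t (le_trans (le_max_left _ _) ht) e e' h)
    (fun e _ N => H2 e N)
end
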